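/- Let G be a 4-critical 3-connected graph with L(G) = {k, k+2l}, k ≥ 5, l ≥ 1, in which every two odd cycles share at least two vertices. Let C be a non-separating induced odd cycle in G and let H = G − V(C), which is connected and bipartite with bipartition (A, B). Then for every vertex u of C, all neighbors of u in H lie in A or all lie in B. -/

import Mathlib

open SimpleGraph

/-- The set of lengths of odd cycles of `G`. -/
def oddCycleLengths {V : Type*} (G : SimpleGraph V) : Set ℕ :=
  {n | Odd n ∧ ∃ (u : V) (w : G.Walk u u), w.IsCycle ∧ w.length = n}

/-- `G` is 4-critical. -/
def IsFourCritical {V : Type*} (G : SimpleGraph V) : Prop :=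
  G.chromaticNumber = 4 ∧ ∀ H : SimpleGraph V, H < G → H.chromaticNumber ≤ 3

/-- `G` is 3-connected: at least 4 vertices and deleting any set of at most two
vertices leaves a connected graph. -/
def ThreeConnected {V : Type*} [Fintype V] (G : SimpleGraph V) : Prop :=
  4 ≤ Fintype.card V ∧ ∀ u v : V, (G.induce (({u, v} : Set V)ᶜ)).Connected

open SimpleGraph.Walk

private lemma split_closed {V : Type*} {G : SimpleGraph V} [DecidableEq V] {z : V}
    (w' : G.Walk z z) (hcnt : 1 < w'.support.tail.count z) :
    ∃ (w1 w2 : G.Walk z z), w1.length + w2.length = w'.length ∧ 1 ≤ w1.length ∧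
      1 ≤ w2.length ∧ (∀ a ∈ w1.support, a ∈ w'.support) ∧
      (∀ a ∈ w2.support, a ∈ w'.support) := by
  cases w' with
  | nil => simp at hcnt
  | cons h' p' =>
    rw [support_cons, List.tail_cons] at hcnt
    have hzp : z ∈ p'.support := by
      have : 0 < p'.support.count z := by omega
      exact List.count_pos_iff.mp this
    have hspec := p'.take_spec hzp
    have hlen : (p'.takeUntil z hzp).length + (p'.dropUntil z hzp).length = p'.length := by
      have := congrArg Walk.length hspec
      rwa [length_append] at this
    have hcnt2 : 1 ≤ ((p'.dropUntil z hzp).support.tail).count z := by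
      have hsupp := congrArg Walk.support hspec
      rw [support_append] at hsupp
      have := congrArg (List.count z) hsupp
      rw [List.count_append, count_support_takeUntil_eq_one] at this
      omega
    have hd1 : 1 ≤ (p'.dropUntil z hzp).length := by
      by_contra hcon
      have h0 : (p'.dropUntil z hzp).length = 0 := by omega
      have : p'.dropUntil z hzp = Walk.nil := nil_iff_eq_nil.mp (length_eq_zero_iff.mp h0)
      rw [this] at hcnt2
      simp at hcnt2
    refine ⟨Walk.cons h' (p'.takeUntil z hzp), p'.dropUntil z hzp, ?_, ?_, hd1, ?_, ?_⟩
    · simp only [length_cons]; omega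
    · simp [length_cons]
    · intro a ha
      rw [support_cons, List.mem_cons] at ha ⊢
      rcases ha with ha | ha
      · exact Or.inl ha
      · exact Or.inr (support_takeUntil_subset p' hzp ha)
    · intro a ha
      rw [support_cons, List.mem_cons]
      exact Or.inr (support_dropUntil_subset p' hzp ha)

private lemma exists_odd_cycle_aux {V : Type*} {G : SimpleGraph V} :
    ∀ (n : ℕ) (x : V) (w : G.Walk x x), w.length = n → Odd w.length →
    ∃ (y : V) (cyc : G.Walk y y), cyc.IsCycle ∧ Odd cyc.length ∧
      ∀ z ∈ cyc.support, z ∈ w.support := by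
  classical
  intro n
  induction n using Nat.strong_induction_on with
  | _ n ih =>
    intro x w hlen hodd
    by_cases hnd : w.support.tail.Nodup
    · cases w with
      | nil => simp [Nat.odd_iff] at hodd
      | cons h p =>
        rename_i y
        rw [support_cons, List.tail_cons] at hnd
        have hpath : p.IsPath := (isPath_def p).mpr hnd
        by_cases he : s(x, y) ∈ p.edges
        · exfalso
          have hq : p.reverse.IsPath := hpath.reverse
          have he' : s(x, y) ∈ p.reverse.edges := by
            rw [edges_reverse, List.mem_reverse]; exact he
          have hlenrev : p.reverse.length = p.length := length_reverse p
          cases hq' : p.reverse with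
          | nil => rw [hq'] at he'; simp at he'
          | cons h2 r =>
            rename_i y2
            rw [hq'] at hq he'
            rw [cons_isPath_iff] at hq
            rw [edges_cons, List.mem_cons] at he'
            rcases he' with he' | he'
            · rw [Sym2.eq_iff] at he'
              rcases he' with ⟨-, hy⟩ | ⟨hx2, -⟩
              · subst hy
                have hrnil : r = Walk.nil := isPath_iff_eq_nil.mp hq.1
                subst hrnil
                rw [hq'] at hlenrev
                simp only [length_cons, length_nil] at hlenrev
                rw [length_cons, ← hlenrev] at hodd
                simp [Nat.odd_iff] at hodd
              · exact hq.2 (hx2 ▸ r.start_mem_support)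
            · exact hq.2 (r.fst_mem_support_of_mem_edges he')
        · exact ⟨x, Walk.cons h p, (cons_isCycle_iff p h).mpr ⟨hpath, he⟩, hodd,
            fun z hz => hz⟩
    · rw [List.nodup_iff_count_le_one] at hnd
      push_neg at hnd
      obtain ⟨z, hz2⟩ := hnd
      have hzs : z ∈ w.support := by
        apply List.mem_of_mem_tail
        exact List.count_pos_iff.mp (by omega)
      have hw'len : (w.rotate z hzs).length = w.length := by
        unfold Walk.rotate
        rw [length_append]
        have := congrArg Walk.length (w.take_spec hzs)
        rw [length_append] at this
        omega
      have hperm : ((w.rotate z hzs).support.tail).Perm w.support.tail :=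
        (support_rotate w z hzs).perm
      have hcnt : 1 < ((w.rotate z hzs).support.tail).count z := by
        rw [hperm.count_eq]; exact hz2
      have hsupsub : ∀ a, a ∈ (w.rotate z hzs).support → a ∈ w.support := by
        intro a ha
        rw [support_eq_cons, List.mem_cons] at ha
        rcases ha with rfl | ha
        · exact hzs
        · exact List.mem_of_mem_tail (hperm.mem_iff.mp ha)
      obtain ⟨w1, w2, hsum, h1, h2, hs1, hs2⟩ := split_closed (w.rotate z hzs) hcnt
      rw [hw'len, hlen] at hsum
      rcases Nat.even_or_odd w1.length with hev | hod
      · have hod2 : Odd w2.length := by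
          rcases Nat.even_or_odd w2.length with hev2 | hod2
          · exfalso
            have hodd' : Odd (w1.length + w2.length) := by rw [hsum, ← hlen]; exact hodd
            have := Nat.even_add.mpr ⟨fun _ => hev2, fun _ => hev⟩
            rw [Nat.even_iff] at this
            rw [Nat.odd_iff] at hodd'
            omega
          · exact hod2
        obtain ⟨y, cyc, hc1, hc2, hc3⟩ := ih w2.length (by omega) z w2 rfl hod2
        exact ⟨y, cyc, hc1, hc2, fun a ha => hsupsub a (hs2 a (hc3 a ha))⟩
      · obtain ⟨y, cyc, hc1, hc2, hc3⟩ := ih w1.length (by omega) z w1 rfl hod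
        exact ⟨y, cyc, hc1, hc2, fun a ha => hsupsub a (hs1 a (hc3 a ha))⟩

private lemma walk_parity {V : Type*} {G : SimpleGraph V} {A B : Set V} {S : Set V}
    (hA : ∀ a ∈ A, ∀ a' ∈ A, ¬ G.Adj a a') (hB : ∀ b ∈ B, ∀ b' ∈ B, ¬ G.Adj b b')
    (hdisj : Disjoint A B) (hS : ∀ x ∈ S, x ∈ A ∪ B) :
    ∀ {x y : S} (q : (G.induce S).Walk x y),
      (((x : V) ∈ A ↔ (y : V) ∈ A) ↔ Even q.length) := by
  intro x y q
  induction q with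
  | nil => simp
  | @cons x z y h q ihq =>
    have hadj : G.Adj (x : V) (z : V) := h
    have hx := hS _ x.2
    have hz := hS _ z.2
    have hxz : ((x : V) ∈ A) ↔ ¬ ((z : V) ∈ A) := by
      constructor
      · intro hxA hzA
        exact hA _ hxA _ hzA hadj
      · intro hzA
        rcases hx with hx | hx
        · exact hx
        · exfalso
          rcases hz with hz | hz
          · exact hzA hz
          · exact hB _ hx _ hz hadj
    rw [Walk.length_cons, Nat.even_add_one, ← ihq]
    tauto

theorem stmt14 {V : Type*} [Fintype V] (G : SimpleGraph V) (k l : ℕ)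
    (hk : 5 ≤ k) (hl : 1 ≤ l)
    (hcrit : IsFourCritical G) (h3c : ThreeConnected G)
    (hL : oddCycleLengths G = {k, k + 2 * l})
    -- every two odd cycles share at least two vertices
    (hint : ∀ (a b : V) (w1 : G.Walk a a) (w2 : G.Walk b b),
      w1.IsCycle → w2.IsCycle → Odd w1.length → Odd w2.length →
      2 ≤ ({x | x ∈ w1.support ∧ x ∈ w2.support} : Set V).ncard)
    -- `C` is a non-separating induced odd cycle
    (v : V) (c : G.Walk v v) (hc : c.IsCycle) (hodd : Odd c.length)
    (hind : ∀ x y, x ∈ c.support → y ∈ c.support → G.Adj x y → c.toSubgraph.Adj x y)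
    (hconn : (G.induce {x | x ∉ c.support}).Connected)
    -- `H = G - V(C)` is bipartite with bipartition `(A, B)`
    (A B : Set V)
    (hAB : A ∪ B = {x | x ∉ c.support}) (hdisj : Disjoint A B)
    (hA : ∀ a ∈ A, ∀ a' ∈ A, ¬ G.Adj a a')
    (hB : ∀ b ∈ B, ∀ b' ∈ B, ¬ G.Adj b b') :
    ∀ u ∈ c.support,
      (∀ w, G.Adj u w → w ∉ c.support → w ∈ A) ∨
      (∀ w, G.Adj u w → w ∉ c.support → w ∈ B) := by
  classical
  intro u hu
  by_contra hcon
  push_neg at hcon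
  obtain ⟨⟨a, hua, has, haA⟩, ⟨b, hub, hbs, hbB⟩⟩ := hcon
  have hS : ∀ x ∈ ({x | x ∉ c.support} : Set V), x ∈ A ∪ B := by
    intro x hx; rw [hAB]; exact hx
  have haB : a ∈ B := by
    rcases hS a has with h | h
    · exact (haA h).elim
    · exact h
  have hbA : b ∈ A := by
    rcases hS b hbs with h | h
    · exact h
    · exact (hbB h).elim
  obtain ⟨q⟩ := hconn.preconnected ⟨b, hbs⟩ ⟨a, has⟩
  have hoddq : Odd q.length := by
    have hpar := walk_parity hA hB hdisj hS q
    rw [← Nat.not_even_iff_odd, ← hpar]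
    intro hiff
    exact haA (hiff.mp hbA)
  let f : G.induce {x | x ∉ c.support} →g G :=
    (SimpleGraph.Embedding.induce (G := G) ({x | x ∉ c.support} : Set V)).toHom
  let q' : G.Walk b a := q.map f
  have hq'len : q'.length = q.length := Walk.length_map _ _
  have hq'sup : ∀ z ∈ q'.support, z ∉ c.support := by
    intro z hz
    replace hz : z ∈ (q.map f).support := hz
    rw [Walk.support_map, List.mem_map] at hz
    obtain ⟨⟨z', hz'⟩, -, rfl⟩ := hz
    exact hz'
  let W : G.Walk u u := Walk.cons hub (q'.concat hua.symm)
  have hWodd : Odd W.length := by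
    show Odd (Walk.cons hub (q'.concat hua.symm)).length
    rw [Walk.length_cons, Walk.length_concat, hq'len]
    rcases hoddq with ⟨m, hm⟩
    exact ⟨m + 1, by omega⟩
  obtain ⟨y, cyc, hcyc, hcodd, hcsub⟩ := exists_odd_cycle_aux W.length u W rfl hWodd
  have h2 := hint v y c cyc hc hcyc hodd hcodd
  have hsub1 : ({x | x ∈ c.support ∧ x ∈ cyc.support} : Set V) ⊆ {u} := by
    rintro x ⟨hx1, hx2⟩
    have hxW := hcsub x hx2
    show x = u
    rw [show W = Walk.cons hub (q'.concat hua.symm) from rfl, Walk.support_cons,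
      List.mem_cons] at hxW
    rcases hxW with rfl | hxW
    · rfl
    · rw [Walk.support_concat, List.mem_append] at hxW
      rcases hxW with hxW | hxW
      · exact ((hq'sup x hxW) hx1).elim
      · simp at hxW; exact hxW
  have hle : ({x | x ∈ c.support ∧ x ∈ cyc.support} : Set V).ncard ≤ 1 := by
    calc ({x | x ∈ c.support ∧ x ∈ cyc.support} : Set V).ncard
        ≤ ({u} : Set V).ncard := Set.ncard_le_ncard hsub1 (Set.finite_singleton u)
      _ = 1 := Set.ncard_singleton u
  omega
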